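/- Let X : ℝ → ℝ² be a twice continuously differentiable curve with ‖X'(s)‖ = 1 for all s, let a < b and ρ > 0, and suppose that the normal map Φ(s,t) = X(s) + t·R(X'(s)) is injective on [a,b] × [−ρ, ρ] and that ρ·‖X''(s)‖ ≤ 1 for all s ∈ [a,b]. Then the two-dimensional Lebesgue measure of the tubular section Φ([a,b] × [−ρ, ρ]) equals 2ρ·(b − a), i.e. the width of the tube times the arc length of the curve segment. (The identity |S| = r·|Γ_s| for the tubular section, used in the proof of Lemma B.1 of the paper.) -/

import Mathlib

open MeasureTheory

/-- Rotation by 90 degrees in the Euclidean plane: `R(a₁, a₂) = (-a₂, a₁)`. -/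
noncomputable def rot (a : EuclideanSpace ℝ (Fin 2)) : EuclideanSpace ℝ (Fin 2) :=
  (WithLp.equiv 2 (Fin 2 → ℝ)).symm ![-a 1, a 0]

noncomputable def jmap (A B C D : ℝ) : ℝ × ℝ →L[ℝ] ℝ × ℝ :=
  ((A • ContinuousLinearMap.fst ℝ ℝ ℝ + B • ContinuousLinearMap.snd ℝ ℝ ℝ).prod
    (C • ContinuousLinearMap.fst ℝ ℝ ℝ + D • ContinuousLinearMap.snd ℝ ℝ ℝ))

lemma jmap_det (A B C D : ℝ) : (jmap A B C D).det = A * D - B * C := by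
  have h : (jmap A B C D).det
      = Matrix.det (LinearMap.toMatrix (Module.Basis.finTwoProd ℝ) (Module.Basis.finTwoProd ℝ)
          ((jmap A B C D) : ℝ × ℝ →ₗ[ℝ] ℝ × ℝ)) := (LinearMap.det_toMatrix _ _).symm
  rw [h, Matrix.det_fin_two]
  simp [LinearMap.toMatrix_apply, Module.Basis.finTwoProd_zero, Module.Basis.finTwoProd_one, jmap,
    smul_eq_mul]

lemma norm_rot (a : EuclideanSpace ℝ (Fin 2)) : ‖rot a‖ = ‖a‖ := by
  rw [EuclideanSpace.norm_eq, EuclideanSpace.norm_eq]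
  simp [Fin.sum_univ_two, rot, Real.norm_eq_abs, sq_abs]
  ring_nf

lemma inner_rot (x y : EuclideanSpace ℝ (Fin 2)) :
    (inner ℝ x (rot y) : ℝ) = -(x 0 * y 1) + x 1 * y 0 := by
  simp [PiLp.inner_apply, RCLike.inner_apply, Fin.sum_univ_two, rot]; ring

lemma continuous_rot : Continuous rot := by
  have h1 : Continuous fun a : EuclideanSpace ℝ (Fin 2) => a 0 :=
    (EuclideanSpace.proj (0 : Fin 2)).continuous
  have h2 : Continuous fun a : EuclideanSpace ℝ (Fin 2) => a 1 :=
    (EuclideanSpace.proj (1 : Fin 2)).continuous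
  have : Continuous fun a : EuclideanSpace ℝ (Fin 2) => (![-a 1, a 0] : Fin 2 → ℝ) := by
    apply continuous_pi
    intro i
    fin_cases i
    · exact h2.neg
    · exact h1
  exact (PiLp.continuous_toLp 2 (fun _ : Fin 2 => ℝ)).comp this

lemma hasDerivAt_comp_proj (X : ℝ → EuclideanSpace ℝ (Fin 2)) (hdX : Differentiable ℝ X)
    (i : Fin 2) (s : ℝ) : HasDerivAt (fun u => X u i) (deriv X s i) s := by
  have := (EuclideanSpace.proj (𝕜 := ℝ) i).hasFDerivAt.comp_hasDerivAt s (hdX s).hasDerivAt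
  exact this

lemma hasFDerivAt_g (X : ℝ → EuclideanSpace ℝ (Fin 2)) (hdX : Differentiable ℝ X)
    (hdX' : Differentiable ℝ (deriv X)) (p : ℝ × ℝ) :
    HasFDerivAt
      (fun q : ℝ × ℝ => (X q.1 0 - q.2 * deriv X q.1 1, X q.1 1 + q.2 * deriv X q.1 0))
      (jmap (deriv X p.1 0 - p.2 * deriv (deriv X) p.1 1) (-(deriv X p.1 1))
            (deriv X p.1 1 + p.2 * deriv (deriv X) p.1 0) (deriv X p.1 0)) p := by
  have A0 : HasFDerivAt (fun q : ℝ × ℝ => X q.1 0)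
      ((deriv X p.1 0) • ContinuousLinearMap.fst ℝ ℝ ℝ) p :=
    (hasDerivAt_comp_proj X hdX 0 p.1).comp_hasFDerivAt p hasFDerivAt_fst
  have A1 : HasFDerivAt (fun q : ℝ × ℝ => X q.1 1)
      ((deriv X p.1 1) • ContinuousLinearMap.fst ℝ ℝ ℝ) p :=
    (hasDerivAt_comp_proj X hdX 1 p.1).comp_hasFDerivAt p hasFDerivAt_fst
  have D0 : HasFDerivAt (fun q : ℝ × ℝ => deriv X q.1 0)
      ((deriv (deriv X) p.1 0) • ContinuousLinearMap.fst ℝ ℝ ℝ) p :=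
    (hasDerivAt_comp_proj (deriv X) hdX' 0 p.1).comp_hasFDerivAt p hasFDerivAt_fst
  have D1 : HasFDerivAt (fun q : ℝ × ℝ => deriv X q.1 1)
      ((deriv (deriv X) p.1 1) • ContinuousLinearMap.fst ℝ ℝ ℝ) p :=
    (hasDerivAt_comp_proj (deriv X) hdX' 1 p.1).comp_hasFDerivAt p hasFDerivAt_fst
  have B : HasFDerivAt (fun q : ℝ × ℝ => q.2) (ContinuousLinearMap.snd ℝ ℝ ℝ) p :=
    hasFDerivAt_snd
  have H := (A0.sub (B.mul D1)).prodMk (A1.add (B.mul D0))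
  refine H.congr_fderiv ?_
  refine ContinuousLinearMap.ext fun q => ?_
  apply Prod.ext <;> simp [jmap, smul_eq_mul] <;> ring

/-- The identity `|S| = r·|Γ_s|` for a tubular section (proof of Lemma B.1 of
the paper): if the normal map of a unit-speed `C²` curve is injective on
`[a,b] × [-ρ,ρ]` and `ρ·‖X''‖ ≤ 1` on `[a,b]`, then the area of the tubular
section equals `2ρ·(b-a)`. -/
theorem stmt11 (X : ℝ → EuclideanSpace ℝ (Fin 2))
    (hX : ContDiff ℝ 2 X) (hunit : ∀ s : ℝ, ‖deriv X s‖ = 1)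
    (a b ρ : ℝ) (hab : a < b) (hρ : 0 < ρ)
    (hinj : Set.InjOn (fun p : ℝ × ℝ => X p.1 + p.2 • rot (deriv X p.1))
      (Set.Icc a b ×ˢ Set.Icc (-ρ) ρ))
    (hcurv : ∀ s ∈ Set.Icc a b, ρ * ‖deriv (deriv X) s‖ ≤ 1) :
    volume ((fun p : ℝ × ℝ => X p.1 + p.2 • rot (deriv X p.1)) ''
        (Set.Icc a b ×ˢ Set.Icc (-ρ) ρ)) =
      ENNReal.ofReal (2 * ρ * (b - a)) := by
  classical
  set Φ : ℝ × ℝ → EuclideanSpace ℝ (Fin 2) :=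
    fun p => X p.1 + p.2 • rot (deriv X p.1) with hΦ
  set A : Set (ℝ × ℝ) := Set.Icc a b ×ˢ Set.Icc (-ρ) ρ with hAdef
  -- smoothness
  have h2 : ContDiff ℝ (1 + 1) X := by
    have : ((2 : ℕ) : WithTop ℕ∞) = 1 + 1 := by norm_num
    exact this ▸ hX
  have hd := contDiff_succ_iff_deriv.mp h2
  have hdX : Differentiable ℝ X := hd.1
  have hC1 : ContDiff ℝ 1 (deriv X) := hd.2.2
  have hd' := contDiff_one_iff_deriv.mp hC1
  have hdX' : Differentiable ℝ (deriv X) := hd'.1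
  have hcont'' : Continuous (deriv (deriv X)) := hd'.2
  -- curvature function
  set κ : ℝ → ℝ := fun s =>
    deriv (deriv X) s 0 * deriv X s 1 - deriv (deriv X) s 1 * deriv X s 0 with hκdef
  have hκcont : Continuous κ := by
    apply Continuous.sub
    · exact ((EuclideanSpace.proj (0 : Fin 2)).continuous.comp hcont'').mul
        ((EuclideanSpace.proj (1 : Fin 2)).continuous.comp hC1.continuous)
    · exact ((EuclideanSpace.proj (1 : Fin 2)).continuous.comp hcont'').mul
        ((EuclideanSpace.proj (0 : Fin 2)).continuous.comp hC1.continuous)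
  have hsum : ∀ s, deriv X s 0 ^ 2 + deriv X s 1 ^ 2 = 1 := by
    intro s
    have h := hunit s
    rw [EuclideanSpace.norm_eq] at h
    have h' : (∑ i, ‖deriv X s i‖ ^ 2) = 1 := by
      have := Real.sqrt_eq_one.mp h
      exact this
    simpa [Fin.sum_univ_two, Real.norm_eq_abs, sq_abs] using h'
  have hκbound : ∀ s, |κ s| ≤ ‖deriv (deriv X) s‖ := by
    intro s
    have h1 : κ s = -(inner ℝ (deriv (deriv X) s) (rot (deriv X s)) : ℝ) := by
      rw [inner_rot]; simp [hκdef]; ring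
    rw [h1, abs_neg]
    calc |(inner ℝ (deriv (deriv X) s) (rot (deriv X s)) : ℝ)|
        ≤ ‖deriv (deriv X) s‖ * ‖rot (deriv X s)‖ := abs_real_inner_le_norm _ _
      _ = ‖deriv (deriv X) s‖ := by rw [norm_rot, hunit, mul_one]
  have hnn : ∀ p ∈ A, 0 ≤ 1 + p.2 * κ p.1 := by
    rintro ⟨s, t⟩ ⟨hs, ht⟩
    have h1 : |t * κ s| ≤ 1 := by
      rw [abs_mul]
      calc |t| * |κ s| ≤ ρ * ‖deriv (deriv X) s‖ := by
            apply mul_le_mul _ (hκbound s) (abs_nonneg _) hρ.le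
            rw [abs_le]; exact ⟨ht.1, ht.2⟩
        _ ≤ 1 := hcurv s hs
    have := neg_abs_le (t * κ s)
    linarith
  -- the planar version of the normal map
  set g : ℝ × ℝ → ℝ × ℝ :=
    fun q => (X q.1 0 - q.2 * deriv X q.1 1, X q.1 1 + q.2 * deriv X q.1 0) with hgdef
  set me : EuclideanSpace ℝ (Fin 2) ≃ᵐ ℝ × ℝ :=
    (MeasurableEquiv.toLp 2 (Fin 2 → ℝ)).symm.trans (MeasurableEquiv.finTwoArrow) with hmedef
  have hme : ∀ x : EuclideanSpace ℝ (Fin 2), me x = (x 0, x 1) := fun x => rfl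
  have hgΦ : ∀ p, g p = me (Φ p) := by
    rintro ⟨s, t⟩
    rw [hme]
    apply Prod.ext <;>
      simp [hgdef, hΦ, PiLp.add_apply, PiLp.smul_apply, rot, smul_eq_mul] <;> ring
  have hΦcont : Continuous Φ := by
    apply Continuous.add
    · exact hdX.continuous.comp continuous_fst
    · exact continuous_snd.smul
        (continuous_rot.comp (hC1.continuous.comp continuous_fst))
  have hmeasΦA : MeasurableSet (Φ '' A) :=
    (((isCompact_Icc.prod isCompact_Icc).image hΦcont).isClosed).measurableSet
  have mp : MeasurePreserving me :=
    (volume_preserving_finTwoArrow ℝ).comp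
      (EuclideanSpace.volume_preserving_symm_measurableEquiv_toLp (Fin 2))
  have hvol : volume (Φ '' A) = volume (g '' A) := by
    have himg : g '' A = me '' (Φ '' A) := by
      rw [← Set.image_comp]
      exact Set.image_congr fun p _ => (hgΦ p)
    rw [himg, MeasurableEquiv.image_eq_preimage_symm]
    exact ((MeasurePreserving.symm me mp).measure_preimage hmeasΦA.nullMeasurableSet).symm
  have hginj : Set.InjOn g A := by
    intro p hp q hq h
    apply hinj hp hq
    apply me.injective
    rw [← hgΦ p, ← hgΦ q, h]
  have hmA : MeasurableSet A := measurableSet_Icc.prod measurableSet_Icc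
  have key := lintegral_abs_det_fderiv_eq_addHaar_image volume hmA
    (fun p _ => (hasFDerivAt_g X hdX hdX' p).hasFDerivWithinAt) hginj
  have hdet : ∀ p ∈ A,
      ENNReal.ofReal |(jmap (deriv X p.1 0 - p.2 * deriv (deriv X) p.1 1) (-(deriv X p.1 1))
          (deriv X p.1 1 + p.2 * deriv (deriv X) p.1 0) (deriv X p.1 0)).det|
        = ENNReal.ofReal (1 + p.2 * κ p.1) := by
    intro p hp
    rw [jmap_det]
    have hval : (deriv X p.1 0 - p.2 * deriv (deriv X) p.1 1) * deriv X p.1 0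
        - (-(deriv X p.1 1)) * (deriv X p.1 1 + p.2 * deriv (deriv X) p.1 0)
        = 1 + p.2 * κ p.1 := by
      simp only [hκdef]
      linear_combination hsum p.1
    rw [hval, abs_of_nonneg (hnn p hp)]
  rw [hvol, ← key, setLIntegral_congr_fun_ae hmA (ae_of_all _ hdet)]
  -- compute the integral
  have hFmeas : Measurable fun p : ℝ × ℝ => ENNReal.ofReal (1 + p.2 * κ p.1) :=
    ENNReal.measurable_ofReal.comp
      ((measurable_const.add (measurable_snd.mul
        (hκcont.measurable.comp measurable_fst))))
  have hinner : ∀ s ∈ Set.Icc a b,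
      ∫⁻ t in Set.Icc (-ρ) ρ, ENNReal.ofReal (1 + t * κ s) = ENNReal.ofReal (2 * ρ) := by
    intro s hs
    have hnn' : ∀ t ∈ Set.Icc (-ρ) ρ, 0 ≤ 1 + t * κ s := fun t ht => hnn (s, t) ⟨hs, ht⟩
    have hint : IntegrableOn (fun t => 1 + t * κ s) (Set.Icc (-ρ) ρ) :=
      (continuous_const.add (continuous_id.mul continuous_const)).integrableOn_Icc
    rw [← ofReal_integral_eq_lintegral_ofReal hint
      ((ae_restrict_iff' measurableSet_Icc).2 (ae_of_all _ hnn'))]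
    congr 1
    rw [MeasureTheory.integral_Icc_eq_integral_Ioc,
      ← intervalIntegral.integral_of_le (by linarith : -ρ ≤ ρ)]
    rw [intervalIntegral.integral_add intervalIntegrable_const
      ((intervalIntegral.intervalIntegrable_id).mul_const _)]
    rw [intervalIntegral.integral_const, intervalIntegral.integral_mul_const, integral_id]
    simp
    ring
  rw [hAdef, Measure.volume_eq_prod, ← Measure.prod_restrict,
    lintegral_prod _ hFmeas.aemeasurable]
  rw [setLIntegral_congr_fun_ae measurableSet_Icc (ae_of_all _ hinner), setLIntegral_const,
    Real.volume_Icc, ← ENNReal.ofReal_mul (by positivity)]
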